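/- If G has closed isoperimetric nesting, then the deaf-rabbit hunter number satisfies Hun[G] = 1 + max_k (mun[k] − k), where mun[k] = min{|N[W]| : W ⊆ V(G), |W| = k}. -/

import Mathlib

open Finset
open scoped Classical

variable {V : Type*} [Fintype V]

/-- Open neighborhood of a set of vertices. -/
noncomputable def nbhd (G : SimpleGraph V) (S : Finset V) : Finset V :=
  Finset.univ.filter fun w => ∃ v ∈ S, G.Adj v w

/-- Possible rabbit positions after playing the strategy `L`, starting from `S`. -/
noncomputable def rabbitFrom (G : SimpleGraph V) (S : Finset V) (L : List (Finset V)) : Finset V :=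
  L.foldl (fun R H => nbhd G (R \ H)) S

/-- A strategy wins if the set of possible rabbit positions is eventually empty. -/
def Wins (G : SimpleGraph V) (L : List (Finset V)) : Prop :=
  rabbitFrom G Finset.univ L = ∅

/-- The hunter number: minimum over winning strategies of the max number of simultaneous shots. -/
noncomputable def hunterNumber (G : SimpleGraph V) : ℕ :=
  sInf {k | ∃ L : List (Finset V), Wins G L ∧ ∀ s ∈ L, s.card ≤ k}

/-- Closed neighborhood of a set of vertices. -/
noncomputable def cnbhd (G : SimpleGraph V) (S : Finset V) : Finset V :=
  S ∪ nbhd G S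

/-- Possible positions of a deaf rabbit (which may stay put) after the strategy `L`. -/
noncomputable def rabbitFromC (G : SimpleGraph V) (S : Finset V) (L : List (Finset V)) :
    Finset V :=
  L.foldl (fun R H => cnbhd G (R \ H)) S

/-- A winning strategy against a deaf rabbit. -/
def WinsC (G : SimpleGraph V) (L : List (Finset V)) : Prop :=
  rabbitFromC G Finset.univ L = ∅

/-- The deaf-rabbit hunter number $Hun[G]$. -/
noncomputable def hunterNumberC (G : SimpleGraph V) : ℕ :=
  sInf {k | ∃ L : List (Finset V), WinsC G L ∧ ∀ s ∈ L, s.card ≤ k}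

/-- $mun[k]$: minimum size of a union of $k$ closed neighborhoods. -/
noncomputable def munC (G : SimpleGraph V) (k : ℕ) : ℕ :=
  sInf {m | ∃ W : Finset V, W.card = k ∧ (cnbhd G W).card = m}

/-! ### Auxiliary lemmas -/

lemma subset_cnbhd (G : SimpleGraph V) (S : Finset V) : S ⊆ cnbhd G S :=
  Finset.subset_union_left

lemma nbhd_mono (G : SimpleGraph V) {A B : Finset V} (h : A ⊆ B) : nbhd G A ⊆ nbhd G B := by
  intro w hw
  simp only [nbhd, mem_filter, mem_univ, true_and] at hw ⊢
  obtain ⟨v, hv, hadj⟩ := hw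
  exact ⟨v, h hv, hadj⟩

lemma cnbhd_mono (G : SimpleGraph V) {A B : Finset V} (h : A ⊆ B) : cnbhd G A ⊆ cnbhd G B :=
  Finset.union_subset_union h (nbhd_mono G h)

lemma cnbhd_empty (G : SimpleGraph V) : cnbhd G (∅ : Finset V) = ∅ := by
  ext x; simp [cnbhd, nbhd]

lemma munC_le_of_card (G : SimpleGraph V) (W : Finset V) :
    munC G W.card ≤ (cnbhd G W).card :=
  Nat.sInf_le ⟨W, rfl, rfl⟩

lemma munC_spec (G : SimpleGraph V) {k : ℕ} (hk : k ≤ Fintype.card V) :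
    ∃ W : Finset V, W.card = k ∧ (cnbhd G W).card = munC G k := by
  have hne : {m | ∃ W : Finset V, W.card = k ∧ (cnbhd G W).card = m}.Nonempty := by
    obtain ⟨W, -, hW⟩ := Finset.exists_subset_card_eq (s := (univ : Finset V)) (n := k) (by simpa using hk)
    exact ⟨(cnbhd G W).card, W, hW, rfl⟩
  exact Nat.sInf_mem hne

lemma le_munC (G : SimpleGraph V) {k : ℕ} (hk : k ≤ Fintype.card V) : k ≤ munC G k := by
  obtain ⟨W, hWc, hW⟩ := munC_spec G hk
  calc k = W.card := hWc.symm
    _ ≤ (cnbhd G W).card := Finset.card_le_card (subset_cnbhd G W)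
    _ = munC G k := hW

lemma munC_le_card (G : SimpleGraph V) {k : ℕ} (hk : k ≤ Fintype.card V) :
    munC G k ≤ Fintype.card V := by
  obtain ⟨W, hWc, hW⟩ := munC_spec G hk
  calc munC G k = (cnbhd G W).card := hW.symm
    _ ≤ Fintype.card V := by simpa using Finset.card_le_card (Finset.subset_univ (cnbhd G W))

lemma rabbitFromC_cons (G : SimpleGraph V) (S H : Finset V) (L : List (Finset V)) :
    rabbitFromC G S (H :: L) = rabbitFromC G (cnbhd G (S \ H)) L := rfl

lemma rabbitFromC_append (G : SimpleGraph V) (S : Finset V) (L₁ L₂ : List (Finset V)) :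
    rabbitFromC G S (L₁ ++ L₂) = rabbitFromC G (rabbitFromC G S L₁) L₂ := by
  simp [rabbitFromC, List.foldl_append]

/-- Lower-bound survival lemma: if `munC G k ≥ k + c` then a deaf rabbit survives
against hunters shooting at most `c` vertices per round. -/
lemma rabbit_survives (G : SimpleGraph V) (c k : ℕ) (hk : k + c ≤ munC G k)
    (L : List (Finset V)) (hL : ∀ s ∈ L, s.card ≤ c) :
    ∀ R : Finset V, 1 ≤ R.card → k + c ≤ R.card →
      1 ≤ (rabbitFromC G R L).card ∧ k + c ≤ (rabbitFromC G R L).card := by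
  induction L with
  | nil => intro R h1 h2; exact ⟨h1, h2⟩
  | cons H T ih =>
    intro R h1 h2
    have hH : H.card ≤ c := hL H (by simp)
    have hsd : k ≤ (R \ H).card := by
      have := Finset.le_card_sdiff H R
      omega
    obtain ⟨W, hWsub, hWcard⟩ := Finset.exists_subset_card_eq (s := R \ H) (n := k) hsd
    have hmun : munC G k ≤ (cnbhd G (R \ H)).card := by
      calc munC G k = munC G W.card := by rw [hWcard]
        _ ≤ (cnbhd G W).card := munC_le_of_card G W
        _ ≤ (cnbhd G (R \ H)).card := Finset.card_le_card (cnbhd_mono G hWsub)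
    have h2' : k + c ≤ (cnbhd G (R \ H)).card := le_trans hk hmun
    have h1' : 1 ≤ (cnbhd G (R \ H)).card := by
      rcases Nat.eq_zero_or_pos (k + c) with h | h
      · have hc0 : c = 0 := by omega
        have hH0 : H = ∅ := Finset.card_eq_zero.mp (by omega)
        have : R ⊆ cnbhd G (R \ H) := by
          rw [hH0, Finset.sdiff_empty]; exact subset_cnbhd G R
        exact le_trans h1 (Finset.card_le_card this)
      · omega
    rw [rabbitFromC_cons]
    exact ih (fun s hs => hL s (by simp [hs])) _ h1' h2'

/-- The sequence of chain-indices followed by the hunters' strategy. -/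
noncomputable def idxSeq (G : SimpleGraph V) (b start : ℕ) : ℕ → ℕ
  | 0 => start
  | t + 1 => if idxSeq G b start t ≤ b then 0 else munC G (idxSeq G b start t - b)

/-- The shot played by the hunters when the rabbit is confined to `Gch m`. -/
noncomputable def chainShot (Gch : ℕ → Finset V) (b m : ℕ) : Finset V :=
  if m = 0 then ∅ else if m ≤ b then Gch m else Gch m \ Gch (m - b)

/-- If $G$ has closed isoperimetric nesting, then $Hun[G] = 1 + \max_k (mun[k]-k)$. -/
theorem hunterNumberC_of_closed_nesting {V : Type*} [Fintype V] [Nonempty V]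
    (G : SimpleGraph V)
    (hnest : ∃ Gch : ℕ → Finset V,
      (∀ i, 1 ≤ i → i ≤ Fintype.card V → (Gch i).card = i) ∧
      (∀ i, 1 ≤ i → i < Fintype.card V → Gch i ⊆ Gch (i + 1)) ∧
      (∀ i, 1 ≤ i → i ≤ Fintype.card V →
        (cnbhd G (Gch i)).card = munC G i ∧
          cnbhd G (Gch i) = Gch ((cnbhd G (Gch i)).card))) :
    hunterNumberC G = 1 + (Finset.range (Fintype.card V + 1)).sup fun k => munC G k - k := by
  classical
  obtain ⟨Gch, hcard, hmono, hnb⟩ := hnest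
  set n := Fintype.card V with hn
  have hn1 : 1 ≤ n := Fintype.card_pos
  set M := (Finset.range (n + 1)).sup (fun k => munC G k - k) with hM
  set b := 1 + M with hbdef
  have hMk : ∀ k, k ≤ n → munC G k - k ≤ M := by
    intro k hk
    rw [hM]
    exact Finset.le_sup (f := fun k => munC G k - k) (Finset.mem_range.mpr (by omega))
  -- chain monotonicity
  have chainMono : ∀ j i, 1 ≤ i → i ≤ j → j ≤ n → Gch i ⊆ Gch j := by
    intro j
    induction j with
    | zero => intro i hi hij hjn; omega
    | succ j ih =>
      intro i hi hij hjn
      rcases Nat.lt_or_ge i (j + 1) with h | h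
      · exact (ih i hi (by omega) (by omega)).trans (hmono j (by omega) (by omega))
      · have : i = j + 1 := by omega
        subst this; exact subset_rfl
  have hGchn : Gch n = univ :=
    Finset.eq_univ_of_card _ (by rw [hcard n hn1 le_rfl])
  -- the strategy
  set shot : ℕ → Finset V := fun t => chainShot Gch b (idxSeq G b n t) with hshot
  set Sif : ℕ → Finset V := fun m => if m = 0 then ∅ else Gch m with hSif
  -- main invariant
  have inv : ∀ t, idxSeq G b n t ≤ n - t ∧
      rabbitFromC G univ ((List.range t).map shot) ⊆ Sif (idxSeq G b n t) := by
    intro t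
    induction t with
    | zero =>
      refine ⟨le_rfl, ?_⟩
      simp only [List.range_zero, List.map_nil]
      have : rabbitFromC G univ [] = univ := rfl
      rw [this, idxSeq, hSif]
      simp only [if_neg (by omega : ¬ n = 0), hGchn]
      exact subset_rfl
    | succ t ih =>
      obtain ⟨hle, hsub⟩ := ih
      set m := idxSeq G b n t with hm
      have hmn : m ≤ n := le_trans hle (Nat.sub_le _ _)
      have hmap : (List.range (t + 1)).map shot = (List.range t).map shot ++ [shot t] := by
        rw [List.range_succ, List.map_append, List.map_cons, List.map_nil]
      rw [hmap, rabbitFromC_append]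
      set R := rabbitFromC G univ ((List.range t).map shot) with hR
      have hstep : rabbitFromC G R [shot t] = cnbhd G (R \ shot t) := rfl
      rw [hstep]
      have hidx : idxSeq G b n (t + 1) = if m ≤ b then 0 else munC G (m - b) := rfl
      have hshott : shot t = chainShot Gch b m := rfl
      rcases Nat.eq_zero_or_pos m with hm0 | hmpos
      · -- m = 0 : rabbit already caught
        have hR0 : R = ∅ := by
          have := hsub
          rw [hSif] at this; simp only [hm0, if_pos rfl] at this
          exact Finset.subset_empty.mp this
        have : cnbhd G (R \ shot t) = ∅ := by rw [hR0]; simp [cnbhd_empty]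
        rw [this, hidx]
        constructor
        · simp [hm0]
        · simp [hSif, hm0]
      · rcases le_or_gt m b with hmb | hmb
        · -- final blow: shoot all of Gch m
          have hshoteq : shot t = Gch m := by
            rw [hshott]
            simp only [chainShot]
            rw [ if_neg (by omega), if_pos hmb]
          have hRsub : R ⊆ Gch m := by
            have := hsub
            rw [hSif] at this; simpa only [if_neg (by omega : ¬ m = 0)] using this
          have : R \ shot t = ∅ := by
            rw [hshoteq, Finset.sdiff_eq_empty_iff_subset]; exact hRsub
          rw [this, cnbhd_empty, hidx, if_pos hmb]
          exact ⟨by omega, by simp [hSif]⟩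
        · -- shrinking step
          have h1mb : 1 ≤ m - b := by omega
          have hmbn : m - b ≤ n := by omega
          have hshoteq : shot t = Gch m \ Gch (m - b) := by
            rw [hshott]
            simp only [chainShot]
            rw [ if_neg (by omega), if_neg (by omega)]
          have hRsub : R ⊆ Gch m := by
            have := hsub
            rw [hSif] at this; simpa only [if_neg (by omega : ¬ m = 0)] using this
          have hsdsub : R \ shot t ⊆ Gch (m - b) := by
            rw [hshoteq]
            intro x hx
            rw [Finset.mem_sdiff, Finset.mem_sdiff] at hx
            push_neg at hx
            obtain ⟨hx1, hx2⟩ := hx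
            exact hx2 (hRsub hx1)
          obtain ⟨hcardnb, hnbeq⟩ := hnb (m - b) h1mb hmbn
          have hcnb : cnbhd G (Gch (m - b)) = Gch (munC G (m - b)) := by
            rw [hnbeq, hcardnb]
          have hsub' : cnbhd G (R \ shot t) ⊆ Gch (munC G (m - b)) := by
            rw [← hcnb]; exact cnbhd_mono G hsdsub
          have hmunpos : 1 ≤ munC G (m - b) := le_trans h1mb (le_munC G hmbn)
          have hmunle : munC G (m - b) ≤ m - 1 := by
            have := hMk (m - b) hmbn
            omega
          rw [hidx, if_neg (by omega)]
          constructor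
          · omega
          · rw [hSif]
            simpa only [if_neg (by omega : ¬ munC G (m - b) = 0)] using hsub'
  -- the strategy wins
  set L := (List.range n).map shot with hL
  have hwin : WinsC G L := by
    obtain ⟨hle, hsub⟩ := inv n
    have : idxSeq G b n n = 0 := by omega
    rw [WinsC, ← hL] at *
    rw [this, hSif] at hsub
    simp only [if_pos rfl] at hsub
    exact Finset.subset_empty.mp hsub
  have hshots : ∀ s ∈ L, s.card ≤ b := by
    intro s hs
    rw [hL, List.mem_map] at hs
    obtain ⟨t, ht, rfl⟩ := hs
    rw [List.mem_range] at ht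
    have hmn : idxSeq G b n t ≤ n := le_trans (inv t).1 (Nat.sub_le _ _)
    set m := idxSeq G b n t with hm
    simp only [hshot, chainShot]
    rcases Nat.eq_zero_or_pos m with hm0 | hmpos
    · rw [if_pos hm0]; simp
    · rcases le_or_gt m b with hmb | hmb
      · rw [if_neg (by omega), if_pos hmb, hcard m hmpos hmn]
        exact hmb
      · rw [if_neg (by omega), if_neg (by omega)]
        rw [Finset.card_sdiff_of_subset (chainMono m (m - b) (by omega) (by omega) hmn)]
        rw [hcard m hmpos hmn, hcard (m - b) (by omega) (by omega)]
        omega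
  have hbmem : b ∈ {k | ∃ L : List (Finset V), WinsC G L ∧ ∀ s ∈ L, s.card ≤ k} :=
    ⟨L, hwin, hshots⟩
  -- lower bound
  have hlower : ∀ c ∈ {k | ∃ L : List (Finset V), WinsC G L ∧ ∀ s ∈ L, s.card ≤ k}, b ≤ c := by
    intro c hc
    obtain ⟨L', hwin', hshots'⟩ := hc
    by_contra hcb
    push_neg at hcb
    obtain ⟨k₀, hk₀mem, hk₀⟩ :=
      Finset.exists_mem_eq_sup (Finset.range (n + 1)) (by simp) (fun k => munC G k - k)
    have hk₀n : k₀ ≤ n := by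
      have := Finset.mem_range.mp hk₀mem; omega
    have hcM : c ≤ munC G k₀ - k₀ := by
      rw [← hk₀, ← hM]; omega
    have hkmun : k₀ ≤ munC G k₀ := le_munC G hk₀n
    have hkc : k₀ + c ≤ munC G k₀ := by omega
    have hmunn : munC G k₀ ≤ n := munC_le_card G hk₀n
    have := rabbit_survives G c k₀ hkc L' hshots' univ (by simpa using hn1)
      (by rw [Finset.card_univ, ← hn]; omega)
    rw [WinsC] at hwin'
    rw [hwin'] at this
    simp at this
  have : hunterNumberC G = b :=
    le_antisymm (Nat.sInf_le hbmem) (le_csInf ⟨b, hbmem⟩ hlower)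
  rw [this, hbdef, hM]
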